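/- Let N ∈ ℕ, and γ_{m,n} > 0 with γ_{m,1} ≥ ⋯ ≥ γ_{m,N} for each of m = 1, 2. Let f(γ, δ) = γδ/(γ+δ+1). Then for every permutation σ of {1,…,N}: ∑_{n=1}^N log₂(1 + f(γ_{1,n}, γ_{2,n})) ≥ ∑_{n=1}^N log₂(1 + f(γ_{1,n}, γ_{2,σ(n)})). -/

import Mathlib

/-- Supermodularity of `h a b = logb 2 (1 + a*b/(a+b+1))`. -/
lemma super_aux (a1 a2 b1 b2 : ℝ) (ha1 : 0 < a1) (ha2 : 0 < a2) (hb1 : 0 < b1) (hb2 : 0 < b2)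
    (ha : a2 ≤ a1) (hb : b2 ≤ b1) :
    Real.logb 2 (1 + a1 * b2 / (a1 + b2 + 1)) + Real.logb 2 (1 + a2 * b1 / (a2 + b1 + 1)) ≤
      Real.logb 2 (1 + a1 * b1 / (a1 + b1 + 1)) + Real.logb 2 (1 + a2 * b2 / (a2 + b2 + 1)) := by
  have key : ∀ a b : ℝ, 0 < a → 0 < b →
      1 + a * b / (a + b + 1) = (1 + a) * (1 + b) / (a + b + 1) := by
    intro a b ha hb
    have h : a + b + 1 ≠ 0 := by positivity
    field_simp
    ring
  rw [key _ _ ha1 hb2, key _ _ ha2 hb1, key _ _ ha1 hb1, key _ _ ha2 hb2]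
  have p12 : (0:ℝ) < (1 + a1) * (1 + b2) / (a1 + b2 + 1) := by positivity
  have p21 : (0:ℝ) < (1 + a2) * (1 + b1) / (a2 + b1 + 1) := by positivity
  have p11 : (0:ℝ) < (1 + a1) * (1 + b1) / (a1 + b1 + 1) := by positivity
  have p22 : (0:ℝ) < (1 + a2) * (1 + b2) / (a2 + b2 + 1) := by positivity
  rw [← Real.logb_mul (ne_of_gt p12) (ne_of_gt p21),
    ← Real.logb_mul (ne_of_gt p11) (ne_of_gt p22)]
  apply Real.logb_le_logb_of_le (by norm_num : (1:ℝ) < 2) (by positivity)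
  rw [div_mul_div_comm, div_mul_div_comm, div_le_div_iff₀ (by positivity) (by positivity)]
  have hX : (0:ℝ) ≤ (1 + a1) * (1 + b2) * ((1 + a2) * (1 + b1)) := by positivity
  nlinarith [mul_nonneg (sub_nonneg.2 ha) (sub_nonneg.2 hb), hX,
    mul_nonneg (mul_nonneg (sub_nonneg.2 ha) (sub_nonneg.2 hb)) hX]

/-- Exchange argument: identity pairing maximizes for index-supermodular `g`. -/
lemma perm_sum_le {N : ℕ} (g : Fin N → Fin N → ℝ)
    (hg : ∀ i j k l : Fin N, i ≤ j → k ≤ l → g i l + g j k ≤ g i k + g j l)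
    (σ : Equiv.Perm (Fin N)) : ∑ n, g n (σ n) ≤ ∑ n, g n n := by
  generalize hc : σ.support.card = c
  induction c using Nat.strong_induction_on generalizing σ with
  | _ c ih =>
    rcases eq_or_ne σ 1 with rfl | hσ
    · simp
    · have hne : σ.support.Nonempty := by
        rw [Finset.nonempty_iff_ne_empty]
        simpa [Equiv.Perm.support_eq_empty_iff] using hσ
      set i := σ.support.max' hne with hi
      have hiS : i ∈ σ.support := σ.support.max'_mem hne
      have hmax : ∀ k ∈ σ.support, k ≤ i := fun k hk => σ.support.le_max' k hk
      set j := σ⁻¹ i with hj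
      have hσj : σ j = i := Equiv.Perm.eq_inv_iff_eq.1 rfl
      have hji : j ≠ i := by
        intro h
        rw [h] at hσj
        exact (Equiv.Perm.mem_support.1 hiS) hσj
      have hjS : j ∈ σ.support := by
        rw [Equiv.Perm.mem_support, hσj]
        exact fun h => hji h.symm
      have hjle : j ≤ i := hmax j hjS
      have hσiS : σ i ∈ σ.support := Equiv.Perm.apply_mem_support.2 hiS
      have hσile : σ i ≤ i := hmax _ hσiS
      set τ := σ * Equiv.swap i j with hτ
      have hτi : τ i = i := by simp [hτ, Equiv.swap_apply_left, hσj]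
      have hτj : τ j = σ i := by simp [hτ, Equiv.swap_apply_right]
      have hτk : ∀ k : Fin N, k ≠ i → k ≠ j → τ k = σ k := by
        intro k hki hkj
        simp [hτ, Equiv.swap_apply_of_ne_of_ne hki hkj]
      have hsub : τ.support ⊆ σ.support.erase i := by
        intro k hk
        rw [Equiv.Perm.mem_support] at hk
        rcases eq_or_ne k i with rfl | hki
        · exact absurd hτi hk
        rcases eq_or_ne k j with rfl | hkj
        · exact Finset.mem_erase.2 ⟨hki, hjS⟩
        · rw [hτk k hki hkj] at hk
          exact Finset.mem_erase.2 ⟨hki, Equiv.Perm.mem_support.2 hk⟩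
      have hcard : τ.support.card < c := by
        calc τ.support.card ≤ (σ.support.erase i).card := Finset.card_le_card hsub
        _ < σ.support.card := Finset.card_erase_lt_of_mem hiS
        _ = c := hc
      have hstep : ∑ n, g n (σ n) ≤ ∑ n, g n (τ n) := by
        have hsplit : ∀ π : Equiv.Perm (Fin N),
            ∑ n, g n (π n) =
              ∑ n ∈ Finset.univ \ {i, j}, g n (π n) + (g i (π i) + g j (π j)) := by
          intro π
          rw [← Finset.sum_sdiff (Finset.subset_univ ({i, j} : Finset (Fin N)))]
          congr 1
          rw [Finset.sum_pair (Ne.symm hji)]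
        rw [hsplit σ, hsplit τ]
        have heq : ∑ n ∈ Finset.univ \ {i, j}, g n (σ n) =
            ∑ n ∈ Finset.univ \ {i, j}, g n (τ n) := by
          apply Finset.sum_congr rfl
          intro k hk
          simp only [Finset.mem_sdiff, Finset.mem_insert, Finset.mem_singleton] at hk
          rw [hτk k (fun h => hk.2 (Or.inl h)) (fun h => hk.2 (Or.inr h))]
        rw [heq]
        have := hg j i (σ i) i hjle hσile
        rw [hτi, hτj, hσj]
        linarith
      calc ∑ n, g n (σ n) ≤ ∑ n, g n (τ n) := hstep
      _ ≤ ∑ n, g n n := ih _ hcard τ rfl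

theorem stmt_16 (N : ℕ) (γ δ : Fin N → ℝ)
    (hγpos : ∀ n, 0 < γ n) (hδpos : ∀ n, 0 < δ n)
    (hγ : ∀ i j : Fin N, i ≤ j → γ j ≤ γ i)
    (hδ : ∀ i j : Fin N, i ≤ j → δ j ≤ δ i)
    (σ : Equiv.Perm (Fin N)) :
    ∑ n, Real.logb 2 (1 + γ n * δ n / (γ n + δ n + 1)) ≥
      ∑ n, Real.logb 2 (1 + γ n * δ (σ n) / (γ n + δ (σ n) + 1)) := by
  exact perm_sum_le (fun n m => Real.logb 2 (1 + γ n * δ m / (γ n + δ m + 1)))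
    (fun i j k l hij hkl =>
      super_aux (γ i) (γ j) (δ k) (δ l) (hγpos i) (hγpos j) (hδpos k) (hδpos l)
        (hγ i j hij) (hδ k l hkl)) σ
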